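/- With the moment-cumulant map m_k = [z⁰](∂ + γd + *_g)^{k-1}(g(z)), g(z) = Σ_{l≥1} κ_l z^{l-1}, one has m_4 = (γ+1)(γ+2)(γ+3)κ_4 + 4(γ+1)(γ+2)κ_3κ_1 + (γ+1)(2γ+3)κ_2² + 6(γ+1)κ_2κ_1² + κ_1⁴. -/

import Mathlib

/-- The derivation operator `∂` on formal power series. -/
noncomputable def derOp (h : PowerSeries ℝ) : PowerSeries ℝ :=
  PowerSeries.mk fun n => ((n : ℝ) + 1) * PowerSeries.coeff (n + 1) h

/-- The lowering operator `d` on formal power series: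
`d(Σ h_n zⁿ) = Σ h_{n+1} zⁿ`. -/
noncomputable def lowOp (h : PowerSeries ℝ) : PowerSeries ℝ :=
  PowerSeries.mk fun n => PowerSeries.coeff (n + 1) h

/-- The generating series `g(z) = Σ_{l ≥ 1} κ_l z^{l-1}`. -/
noncomputable def cumulGF (κ : ℕ → ℝ) : PowerSeries ℝ :=
  PowerSeries.mk fun n => κ (n + 1)

/-- The operator `∂ + γd + *_g` on formal power series. -/
noncomputable def momentOp (γ : ℝ) (κ : ℕ → ℝ) (h : PowerSeries ℝ) : PowerSeries ℝ :=
  derOp h + γ • lowOp h + cumulGF κ * h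

lemma coeff_momentOp (γ : ℝ) (κ : ℕ → ℝ) (h : PowerSeries ℝ) (n : ℕ) :
    PowerSeries.coeff n (momentOp γ κ h) =
      ((n : ℝ) + 1) * PowerSeries.coeff (n + 1) h +
        γ * PowerSeries.coeff (n + 1) h +
        ∑ i ∈ Finset.range (n + 1), κ (i + 1) * PowerSeries.coeff (n - i) h := by
  simp [momentOp, derOp, lowOp, cumulGF, PowerSeries.coeff_mul,
    Finset.Nat.sum_antidiagonal_eq_sum_range_succ fun i j => κ (i + 1) * PowerSeries.coeff j h]

/-- with `m_k = [z⁰](∂ + γd + *_g)^{k-1}(g)`, one has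
`m_4 = (γ+1)(γ+2)(γ+3)κ_4 + 4(γ+1)(γ+2)κ_3κ_1 + (γ+1)(2γ+3)κ_2² + 6(γ+1)κ_2κ_1² + κ_1⁴`. -/
theorem fourth_moment (γ : ℝ) (κ : ℕ → ℝ) :
    PowerSeries.constantCoeff ((momentOp γ κ)^[3] (cumulGF κ)) =
      (γ + 1) * (γ + 2) * (γ + 3) * κ 4 + 4 * (γ + 1) * (γ + 2) * κ 3 * κ 1 +
        (γ + 1) * (2 * γ + 3) * κ 2 ^ 2 + 6 * (γ + 1) * κ 2 * κ 1 ^ 2 + κ 1 ^ 4 := by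
  rw [← PowerSeries.coeff_zero_eq_constantCoeff]
  simp only [Function.iterate_succ, Function.iterate_zero, Function.comp_apply, id]
  simp [coeff_momentOp, cumulGF, Finset.sum_range_succ]
  ring
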